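/- Let N be a real n×q matrix, A_e a real m_e×n matrix, A_i a real m_i×n matrix, A₀ a real m₀×n matrix, and Ā a real m̄×n matrix with Ā·N = 0. Let λ₀, w₀ : Fin m₀ → ℝ with λ₀ j > 0 and w₀ j > 0 for all j, let d : Fin m_i → ℝ with d j > 0 for all j, and let x ∈ ℝⁿ, b_e ∈ ℝ^{m_e}, λ̄ ∈ ℝ^{m̄}, F ∈ ℝ^{m₀}, G ∈ ℝ^{m_i}. Define H := [ diag(fun j => √(λ₀ j / w₀ j)) · A₀ · N ; diag(fun j => √(d j)) · A_i · N ; A_e · N ], g := ( diag(fun j => √(w₀ j / λ₀ j))·F ; diag(fun j => 1/√(d j))·G ; b_e − A_e·x ) stacked conformally, C := A_eᵀ·A_e + A_iᵀ·diag(d)·A_i + A₀ᵀ·diag(fun j => λ₀ j / w₀ j)·A₀, and r₁ := Āᵀ·λ̄ + A₀ᵀ·F + A_eᵀ·(b_e − A_e·x) + A_iᵀ·G. Then for every Δz ∈ ℝ^q, Δz minimizes the function z ↦ ‖H·z − g‖² over ℝ^q if and only if (Nᵀ·C·N)·Δz = Nᵀ·r₁. In other words, the projected normal equations of the interior-point Newton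 step are exactly the optimality conditions of the least-squares problem min_z ‖H·z − g‖². -/

import Mathlib

open Matrix

/-- Least-squares form of the projected normal equations of the IPM-HLSP:
`Δz` minimizes `z ↦ ‖H·z − g‖²` (Euclidean norm) if and only if
`(Nᵀ·C·N)·Δz = Nᵀ·r₁`. -/

lemma esp_norm_sq {ι : Type*} [Fintype ι] (v : ι → ℝ) :
    ‖(EuclideanSpace.equiv ι ℝ).symm v‖ ^ 2 = v ⬝ᵥ v := by
  rw [EuclideanSpace.norm_eq, Real.sq_sqrt (by positivity)]
  simp [dotProduct, sq]

lemma quad_coeff_zero (a b : ℝ) (hb : 0 ≤ b) (h : ∀ t : ℝ, 0 ≤ 2 * t * a + t ^ 2 * b) :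
    a = 0 := by
  have h1 := h (-a / (b + 1))
  have hb1 : (0:ℝ) < b + 1 := by linarith
  have e : 2 * (-a/(b+1)) * a + (-a/(b+1))^2 * b = -(a^2*(b+2))/(b+1)^2 := by
    field_simp; ring
  rw [e] at h1
  have h2 : a ^ 2 * (b + 2) ≤ 0 := by
    rw [le_div_iff₀ (pow_pos hb1 2)] at h1; linarith
  nlinarith [sq_nonneg a]

lemma mulVec_dot {ι q : Type*} [Fintype ι] [Fintype q]
    (H : Matrix ι q ℝ) (v : q → ℝ) (r : ι → ℝ) :
    (H *ᵥ v) ⬝ᵥ r = v ⬝ᵥ (Hᵀ *ᵥ r) := by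
  rw [dotProduct_mulVec, vecMul_transpose]

lemma lsq_iff {ι q : Type*} [Fintype ι] [Fintype q] [DecidableEq q]
    (H : Matrix ι q ℝ) (g : ι → ℝ) (Δz : q → ℝ) :
    (∀ z : q → ℝ, (H *ᵥ Δz - g) ⬝ᵥ (H *ᵥ Δz - g) ≤ (H *ᵥ z - g) ⬝ᵥ (H *ᵥ z - g)) ↔
      Hᵀ *ᵥ (H *ᵥ Δz - g) = 0 := by
  set r := H *ᵥ Δz - g with hr
  constructor
  · intro hmin
    funext i
    have key : ∀ v : q → ℝ, (H *ᵥ v) ⬝ᵥ r = 0 := by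
      intro v
      have h2 : ∀ t : ℝ, 0 ≤ 2 * t * ((H *ᵥ v) ⬝ᵥ r) + t ^ 2 * ((H *ᵥ v) ⬝ᵥ (H *ᵥ v)) := by
        intro t
        have hmm := hmin (Δz + t • v)
        have hexp : H *ᵥ (Δz + t • v) - g = r + t • (H *ᵥ v) := by
          rw [hr, mulVec_add, mulVec_smul]; abel
        rw [hexp] at hmm
        simp only [dotProduct_add, add_dotProduct, smul_dotProduct, dotProduct_smul,
          smul_eq_mul] at hmm
        rw [dotProduct_comm r (H *ᵥ v)] at hmm
        ring_nf at hmm ⊢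
        linarith
      exact quad_coeff_zero _ _ (by
        simpa [dotProduct] using Finset.sum_nonneg fun j _ => mul_self_nonneg ((H *ᵥ v) j)) h2
    have h3 := key (Pi.single i 1)
    rw [mulVec_dot, single_dotProduct, one_mul] at h3
    simpa using h3
  · intro h0 z
    have hexp : H *ᵥ z - g = r + H *ᵥ (z - Δz) := by
      rw [hr, mulVec_sub]; abel
    rw [hexp]
    have hc : (H *ᵥ (z - Δz)) ⬝ᵥ r = 0 := by
      rw [mulVec_dot, h0, dotProduct_zero]
    simp only [dotProduct_add, add_dotProduct, hc, dotProduct_comm r (H *ᵥ (z - Δz))]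
    have hnn : 0 ≤ (H *ᵥ (z - Δz)) ⬝ᵥ (H *ᵥ (z - Δz)) :=
      Finset.sum_nonneg fun j _ => mul_self_nonneg _
    linarith

theorem lsq_min_iff_projected_normal_equations {n q me mi m₀ mb : ℕ}
    (N : Matrix (Fin n) (Fin q) ℝ)
    (Ae : Matrix (Fin me) (Fin n) ℝ) (Ai : Matrix (Fin mi) (Fin n) ℝ)
    (A₀ : Matrix (Fin m₀) (Fin n) ℝ) (Ab : Matrix (Fin mb) (Fin n) ℝ)
    (hAbN : Ab * N = 0)
    (lam₀ w₀ : Fin m₀ → ℝ)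
    (hlam₀ : ∀ j, 0 < lam₀ j) (hw₀ : ∀ j, 0 < w₀ j)
    (d : Fin mi → ℝ) (hd : ∀ j, 0 < d j)
    (x : Fin n → ℝ) (be : Fin me → ℝ) (lamb : Fin mb → ℝ)
    (F : Fin m₀ → ℝ) (G : Fin mi → ℝ)
    (H : Matrix ((Fin m₀ ⊕ Fin mi) ⊕ Fin me) (Fin q) ℝ)
    (hH : H = fromRows
      (fromRows
        (Matrix.diagonal (fun j => Real.sqrt (lam₀ j / w₀ j)) * A₀ * N)
        (Matrix.diagonal (fun j => Real.sqrt (d j)) * Ai * N))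
      (Ae * N))
    (g : (Fin m₀ ⊕ Fin mi) ⊕ Fin me → ℝ)
    (hg : g = Sum.elim
      (Sum.elim
        (Matrix.diagonal (fun j => Real.sqrt (w₀ j / lam₀ j)) *ᵥ F)
        (Matrix.diagonal (fun j => 1 / Real.sqrt (d j)) *ᵥ G))
      (be - Ae *ᵥ x))
    (C : Matrix (Fin n) (Fin n) ℝ)
    (hC : C = Aeᵀ * Ae + Aiᵀ * Matrix.diagonal d * Ai +
      A₀ᵀ * Matrix.diagonal (fun j => lam₀ j / w₀ j) * A₀)
    (r₁ : Fin n → ℝ)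
    (hr₁ : r₁ = Abᵀ *ᵥ lamb + A₀ᵀ *ᵥ F + Aeᵀ *ᵥ (be - Ae *ᵥ x) + Aiᵀ *ᵥ G)
    (Δz : Fin q → ℝ) :
    (∀ z : Fin q → ℝ,
        ‖(EuclideanSpace.equiv ((Fin m₀ ⊕ Fin mi) ⊕ Fin me) ℝ).symm
            (H *ᵥ Δz - g)‖ ^ 2 ≤
          ‖(EuclideanSpace.equiv ((Fin m₀ ⊕ Fin mi) ⊕ Fin me) ℝ).symm
            (H *ᵥ z - g)‖ ^ 2) ↔
      (Nᵀ * C * N) *ᵥ Δz = Nᵀ *ᵥ r₁ := by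
  -- diagonal product facts
  have d1 : (Matrix.diagonal fun j => Real.sqrt (lam₀ j / w₀ j)) *
      (Matrix.diagonal fun j => Real.sqrt (lam₀ j / w₀ j)) =
      Matrix.diagonal (fun j => lam₀ j / w₀ j) := by
    rw [diagonal_mul_diagonal,
      funext fun j => Real.mul_self_sqrt (div_nonneg (hlam₀ j).le (hw₀ j).le)]
  have d2 : (Matrix.diagonal fun j => Real.sqrt (d j)) *
      (Matrix.diagonal fun j => Real.sqrt (d j)) = Matrix.diagonal d := by
    rw [diagonal_mul_diagonal, funext fun j => Real.mul_self_sqrt (hd j).le]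
  have d3 : (Matrix.diagonal fun j => Real.sqrt (lam₀ j / w₀ j)) *
      (Matrix.diagonal fun j => Real.sqrt (w₀ j / lam₀ j)) = 1 := by
    rw [diagonal_mul_diagonal]
    rw [show (fun j => Real.sqrt (lam₀ j / w₀ j) * Real.sqrt (w₀ j / lam₀ j)) = fun _ => 1 from ?_,
      diagonal_one]
    funext j
    rw [← Real.sqrt_mul (div_nonneg (hlam₀ j).le (hw₀ j).le)]
    rw [div_mul_div_comm, show lam₀ j * w₀ j / (w₀ j * lam₀ j) = 1 by
      rw [mul_comm (lam₀ j)]; exact div_self (ne_of_gt (mul_pos (hw₀ j) (hlam₀ j)))]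
    exact Real.sqrt_one
  have d4 : (Matrix.diagonal fun j => Real.sqrt (d j)) *
      (Matrix.diagonal fun j => 1 / Real.sqrt (d j)) = 1 := by
    rw [diagonal_mul_diagonal]
    rw [show (fun j => Real.sqrt (d j) * (1 / Real.sqrt (d j))) = fun _ => 1 from ?_, diagonal_one]
    funext j
    rw [mul_one_div, div_self (Real.sqrt_ne_zero'.mpr (hd j))]
  -- normal matrix identity
  have hHtH : Hᵀ * H = Nᵀ * C * N := by
    subst hH hC
    rw [transpose_fromRows, transpose_fromRows, fromCols_mul_fromRows,
      fromCols_mul_fromRows]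
    simp only [transpose_mul, diagonal_transpose]
    simp only [Matrix.mul_add, Matrix.add_mul, Matrix.mul_assoc]
    rw [show ∀ X : Matrix (Fin m₀) (Fin q) ℝ,
        (Matrix.diagonal fun j => Real.sqrt (lam₀ j / w₀ j)) *
        ((Matrix.diagonal fun j => Real.sqrt (lam₀ j / w₀ j)) * X) =
        Matrix.diagonal (fun j => lam₀ j / w₀ j) * X from fun X => by
          rw [← Matrix.mul_assoc, d1],
      show ∀ X : Matrix (Fin mi) (Fin q) ℝ,
        (Matrix.diagonal fun j => Real.sqrt (d j)) *
        ((Matrix.diagonal fun j => Real.sqrt (d j)) * X) = Matrix.diagonal d * X from fun X => by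
          rw [← Matrix.mul_assoc, d2]]
    abel
  -- right-hand side identity
  have hHtg : Hᵀ *ᵥ g = Nᵀ *ᵥ r₁ := by
    subst hH hg hr₁
    rw [transpose_fromRows, transpose_fromRows, fromCols_mulVec_sumElim,
      fromCols_mulVec_sumElim]
    simp only [transpose_mul, diagonal_transpose, mulVec_mulVec]
    have hAb : Nᵀ * Abᵀ = 0 := by
      rw [← transpose_mul, hAbN, transpose_zero]
    simp only [mulVec_add, mulVec_mulVec, hAb, zero_mulVec, zero_add]
    rw [show Nᵀ * (A₀ᵀ * Matrix.diagonal fun j => Real.sqrt (lam₀ j / w₀ j)) *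
        (Matrix.diagonal fun j => Real.sqrt (w₀ j / lam₀ j)) = Nᵀ * A₀ᵀ from by
        rw [Matrix.mul_assoc, Matrix.mul_assoc, d3, Matrix.mul_one],
      show Nᵀ * (Aiᵀ * Matrix.diagonal fun j => Real.sqrt (d j)) *
        (Matrix.diagonal fun j => 1 / Real.sqrt (d j)) = Nᵀ * Aiᵀ from by
        rw [Matrix.mul_assoc, Matrix.mul_assoc, d4, Matrix.mul_one]]
    abel
  -- assemble
  simp only [esp_norm_sq]
  rw [lsq_iff, mulVec_sub, mulVec_mulVec, sub_eq_zero, hHtH, hHtg]
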